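/- Let k ≥ 3, let 0 < p < 1, let 2 ≤ ℓ < k, and let π = k_1 + … + k_t be a proper partition of k with max_i k_i ≤ ℓ. Then every hypergraph sequence satisfying CD_p(ℓ) also satisfies Expand_p(π). -/

import Mathlib

open Filter Finset Asymptotics

/-- A hypergraph sequence: for each `n`, the edge set of a hypergraph
on the vertex set `Fin n`. -/
abbrev HSeq : Type := (n : ℕ) → Finset (Finset (Fin n))

/-- The sequence is `k`-uniform: every edge has exactly `k` vertices. -/
def UniformSeq (k : ℕ) (H : HSeq) : Prop :=
  ∀ n : ℕ, ∀ e ∈ H n, e.card = k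

/-- A proper partition of `k`: an (ordered list representing an unordered) collection of
at least two positive integers summing to `k`. -/
def ProperPartition (k : ℕ) (π : List ℕ) : Prop :=
  2 ≤ π.length ∧ (∀ m ∈ π, 0 < m) ∧ π.sum = k

/-- `π'` is a refinement of `π`: there is a surjection `φ` from the parts of `π'`
to the parts of `π` so that each part of `π` is the sum of its `φ`-preimages. -/
def IsRefinement (π' π : List ℕ) : Prop :=
  ∃ φ : Fin π'.length → Fin π.length, Function.Surjective φ ∧
    ∀ i : Fin π.length, π.get i = ∑ j ∈ Finset.univ.filter (fun j => φ j = i), π'.get j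

/-- `e(S_1, …, S_t)`: the number of tuples `(s_1, …, s_t) ∈ S_1 × ⋯ × S_t` whose
union is an edge of `H`. -/
def eCount {n : ℕ} (H : Finset (Finset (Fin n))) {t : ℕ}
    (S : Fin t → Finset (Finset (Fin n))) : ℕ :=
  ((Fintype.piFinset S).filter (fun s => Finset.univ.biUnion s ∈ H)).card

/-- The property `Expand_p(π)` of a hypergraph sequence. -/
def Expand (k : ℕ) (p : ℝ) (π : List ℕ) (H : HSeq) : Prop :=
  ∃ f : ℕ → ℝ, f =o[atTop] (fun n => (n : ℝ) ^ k) ∧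
    ∀ n : ℕ, ∀ S : Fin π.length → Finset (Finset (Fin n)),
      (∀ i : Fin π.length, ∀ s ∈ S i, s.card = π.get i) →
      |(eCount (H n) S : ℝ) - p * ∏ i : Fin π.length, ((S i).card : ℝ)| ≤ f n

/-- The property `PartiteExpand_p(π)`: the `Expand` estimate is only required when the
vertex sets `V(S_i)` are pairwise disjoint. -/
def PartiteExpand (k : ℕ) (p : ℝ) (π : List ℕ) (H : HSeq) : Prop :=
  ∃ f : ℕ → ℝ, f =o[atTop] (fun n => (n : ℝ) ^ k) ∧
    ∀ n : ℕ, ∀ S : Fin π.length → Finset (Finset (Fin n)),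
      (∀ i : Fin π.length, ∀ s ∈ S i, s.card = π.get i) →
      (∀ i j : Fin π.length, i ≠ j →
        Disjoint ((S i).biUnion id) ((S j).biUnion id)) →
      |(eCount (H n) S : ℝ) - p * ∏ i : Fin π.length, ((S i).card : ℝ)| ≤ f n

/-- `K_k(G)`: the `k`-element vertex subsets all of whose `ℓ`-element subsets are
edges of the `ℓ`-uniform hypergraph `G`. -/
def cliqueSet (k ℓ : ℕ) {n : ℕ} (G : Finset (Finset (Fin n))) : Finset (Finset (Fin n)) :=
  (Finset.powersetCard k (Finset.univ : Finset (Fin n))).filter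
    (fun T => ∀ S ∈ Finset.powersetCard ℓ T, S ∈ G)

/-- The property `CD_p(ℓ)` of a hypergraph sequence. -/
def CD (k : ℕ) (p : ℝ) (ℓ : ℕ) (H : HSeq) : Prop :=
  ∃ f : ℕ → ℝ, f =o[atTop] (fun n => (n : ℝ) ^ k) ∧
    ∀ n : ℕ, ∀ G : Finset (Finset (Fin n)), (∀ e ∈ G, e.card = ℓ) →
      |(((cliqueSet k ℓ G) ∩ H n).card : ℝ) - p * ((cliqueSet k ℓ G).card : ℝ)| ≤ f n

/-- The property `CD_p(ℓ,s)` of a hypergraph sequence: `G` ranges over `ℓ`-uniform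
hypergraphs whose vertex set `W` is a subset of `Fin n`, and one counts `k`-sets
inducing at least `s` edges of `G`. -/
def CDs (k : ℕ) (p : ℝ) (ℓ s : ℕ) (H : HSeq) : Prop :=
  ∃ f : ℕ → ℝ, f =o[atTop] (fun n => (n : ℝ) ^ k) ∧
    ∀ n : ℕ, ∀ W : Finset (Fin n), ∀ G : Finset (Finset (Fin n)),
      (∀ e ∈ G, e.card = ℓ ∧ e ⊆ W) →
      |(((H n).filter (fun T => s ≤ (G.filter (fun e => e ⊆ T)).card)).card : ℝ) -
        p * (((Finset.powersetCard k W).filter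
          (fun T => s ≤ (G.filter (fun e => e ⊆ T)).card)).card : ℝ)| ≤ f n

/-- The `k`-tuple `(x_1, …, x_{k-ℓ}, y_{1,ε_1}, …, y_{ℓ,ε_ℓ})`. -/
def octTuple {n : ℕ} (k ℓ : ℕ) (x : Fin (k - ℓ) → Fin n) (y : Fin ℓ × Fin 2 → Fin n)
    (ε : Fin ℓ → Fin 2) (i : Fin k) : Fin n :=
  if h : (i : ℕ) < k - ℓ then x ⟨(i : ℕ), h⟩
  else
    have hi : (i : ℕ) - (k - ℓ) < ℓ := by have := i.isLt; omega
    y (⟨(i : ℕ) - (k - ℓ), hi⟩, ε ⟨(i : ℕ) - (k - ℓ), hi⟩)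

/-- The squashed octahedron `O[x⃗, y⃗]`: the collection of `k`-element sets of the form
`{x_1, …, x_{k-ℓ}, y_{1,i_1}, …, y_{ℓ,i_ℓ}}`. -/
def octSet {n : ℕ} (k ℓ : ℕ) (x : Fin (k - ℓ) → Fin n)
    (y : Fin ℓ × Fin 2 → Fin n) : Finset (Finset (Fin n)) :=
  (Finset.image (fun ε : Fin ℓ → Fin 2 =>
    Finset.image (octTuple k ℓ x y ε) Finset.univ) Finset.univ).filter
    (fun T => T.card = k)

/-- `Σ (−1)^{|O[x⃗,y⃗] ∩ E(H)|}` over all choices of vertices. -/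
noncomputable def devSum (k ℓ : ℕ) {n : ℕ} (H : Finset (Finset (Fin n))) : ℝ :=
  ∑ x : Fin (k - ℓ) → Fin n, ∑ y : Fin ℓ × Fin 2 → Fin n,
    (-1 : ℝ) ^ ((octSet k ℓ x y ∩ H).card)

/-- The property `Dev(ℓ)` of a hypergraph sequence. -/
def Dev (k ℓ : ℕ) (H : HSeq) : Prop :=
  (fun n => devSum k ℓ (H n)) =o[atTop] (fun n => (n : ℝ) ^ (k + ℓ))

open scoped Classical in
/-- `dev_{ℓ,P}(H)`: the deviation sum restricted to octahedra all of whose `k`-tuples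
lie in `P`. -/
noncomputable def devP (k ℓ : ℕ) {n : ℕ} (H : Finset (Finset (Fin n)))
    (P : Set (Fin k → Fin n)) : ℝ :=
  ∑ x : Fin (k - ℓ) → Fin n, ∑ y : Fin ℓ × Fin 2 → Fin n,
    if ∀ ε : Fin ℓ → Fin 2, octTuple k ℓ x y ε ∈ P then
      (-1 : ℝ) ^ ((octSet k ℓ x y ∩ H).card)
    else 0

/-- `Q ⊆ V(H)^k` is complete in coordinate `i`: membership in `Q` only depends on the
coordinates other than `i`. -/
def CompleteInCoord {n k : ℕ} (Q : Set (Fin k → Fin n)) (i : Fin k) : Prop :=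
  ∃ Q' : Set ({j : Fin k // j ≠ i} → Fin n),
    Q = {z : Fin k → Fin n | (fun j : {j : Fin k // j ≠ i} => z j.1) ∈ Q'}

namespace CDExpandAux

open Finset

/-! ### Offsets and classes -/

def off (π : List ℕ) (i : ℕ) : ℕ := (π.take i).sum

lemma off_succ (π : List ℕ) (i : Fin π.length) :
    off π ((i : ℕ) + 1) = off π i + π.get i := by
  simp [off, List.sum_take_succ _ _ i.isLt, List.get_eq_getElem]

lemma off_le_off (π : List ℕ) {a b : ℕ} (h : a ≤ b) : off π a ≤ off π b := by
  have hb : b = a + (b - a) := by omega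
  rw [hb, off, off, List.take_add, List.sum_append]
  exact Nat.le_add_right _ _

lemma sum_get (π : List ℕ) : ∑ i : Fin π.length, π.get i = π.sum := by
  simpa [List.get_eq_getElem] using Fin.sum_univ_get π

lemma off_add_get_le (π : List ℕ) {k : ℕ} (hsum : π.sum = k) (i : Fin π.length) :
    off π i + π.get i ≤ k := by
  rw [← off_succ]
  calc off π ((i : ℕ) + 1) ≤ off π π.length := off_le_off π i.isLt
    _ = π.sum := by simp [off]
    _ = k := hsum

/-- The classes (blocks of labels) associated to a partition. -/
def cls (π : List ℕ) (k : ℕ) (i : Fin π.length) : Finset (Fin k) :=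
  Finset.univ.filter (fun c => off π i ≤ (c : ℕ) ∧ (c : ℕ) < off π i + π.get i)

lemma mem_cls {π : List ℕ} {k : ℕ} {i : Fin π.length} {c : Fin k} :
    c ∈ cls π k i ↔ off π i ≤ (c : ℕ) ∧ (c : ℕ) < off π i + π.get i := by
  simp [cls]

lemma card_cls (π : List ℕ) {k : ℕ} (hsum : π.sum = k) (i : Fin π.length) :
    (cls π k i).card = π.get i := by
  have hle := off_add_get_le π hsum i
  have hcl : cls π k i = (Finset.Ico (off π i) (off π i + π.get i)).attachFin
      (fun m hm => lt_of_lt_of_le (Finset.mem_Ico.mp hm).2 hle) := by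
    ext c
    simp [cls, Finset.mem_attachFin, Finset.mem_Ico]
  rw [hcl, Finset.card_attachFin, Nat.card_Ico]
  omega

lemma cls_disjoint (π : List ℕ) (k : ℕ) {i j : Fin π.length} (hij : i ≠ j) :
    Disjoint (cls π k i) (cls π k j) := by
  rw [Finset.disjoint_left]
  intro c hci hcj
  rw [mem_cls] at hci hcj
  have hvij : (i : ℕ) ≠ (j : ℕ) := fun h => hij (Fin.ext h)
  rcases lt_or_gt_of_ne hvij with h | h
  · have h1 : off π ((i : ℕ) + 1) ≤ off π j := off_le_off π (by omega)
    rw [off_succ] at h1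
    omega
  · have h1 : off π ((j : ℕ) + 1) ≤ off π i := off_le_off π (by omega)
    rw [off_succ] at h1
    omega

lemma cls_cover (π : List ℕ) {k : ℕ} (hsum : π.sum = k) (c : Fin k) :
    ∃ i : Fin π.length, c ∈ cls π k i := by
  have hcard : (Finset.univ.biUnion (cls π k)).card = k := by
    rw [Finset.card_biUnion (fun i _ j _ hij => cls_disjoint π k hij)]
    simp_rw [card_cls π hsum]
    rw [sum_get π, hsum]
  have huniv : Finset.univ.biUnion (cls π k) = Finset.univ :=
    Finset.eq_univ_of_card _ (by rw [hcard, Fintype.card_fin])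
  have : c ∈ Finset.univ.biUnion (cls π k) := huniv ▸ Finset.mem_univ c
  obtain ⟨i, -, hi⟩ := Finset.mem_biUnion.mp this
  exact ⟨i, hi⟩

/-! ### The coloured families and auxiliary graph -/

def SChi (π : List ℕ) (k : ℕ) {n : ℕ} (χ : Fin n → Fin k)
    (S : Fin π.length → Finset (Finset (Fin n))) (i : Fin π.length) :
    Finset (Finset (Fin n)) :=
  (S i).filter (fun s => s.image χ = cls π k i)

def GChi (π : List ℕ) (k ℓ : ℕ) {n : ℕ} (χ : Fin n → Fin k)
    (S : Fin π.length → Finset (Finset (Fin n))) : Finset (Finset (Fin n)) :=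
  (Finset.powersetCard ℓ Finset.univ).filter
    (fun e => (e.image χ).card = ℓ ∧
      ∀ i, (e.filter (fun v => χ v ∈ cls π k i)).card = π.get i →
        e.filter (fun v => χ v ∈ cls π k i) ∈ S i)

lemma filter_biUnion (π : List ℕ) (k : ℕ) {n : ℕ} (χ : Fin n → Fin k)
    (s : Fin π.length → Finset (Fin n))
    (himg : ∀ i, (s i).image χ = cls π k i) (i : Fin π.length) :
    (Finset.univ.biUnion s).filter (fun v => χ v ∈ cls π k i) = s i := by
  ext v
  simp only [Finset.mem_filter, Finset.mem_biUnion, Finset.mem_univ, true_and]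
  constructor
  · rintro ⟨⟨j, hvj⟩, hvc⟩
    have hji : j = i := by
      by_contra hne
      exact Finset.disjoint_left.mp (cls_disjoint π k hne)
        (himg j ▸ Finset.mem_image_of_mem χ hvj) hvc
    exact hji ▸ hvj
  · intro hv
    exact ⟨⟨i, hv⟩, himg i ▸ Finset.mem_image_of_mem χ hv⟩

lemma biUnion_injOn (π : List ℕ) (k : ℕ) {n : ℕ} (χ : Fin n → Fin k)
    (S : Fin π.length → Finset (Finset (Fin n))) :
    Set.InjOn (fun s : Fin π.length → Finset (Fin n) => Finset.univ.biUnion s)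
      (Fintype.piFinset (SChi π k χ S)) := by
  intro s hs s' hs' heq
  rw [Finset.mem_coe, Fintype.mem_piFinset] at hs hs'
  have himg : ∀ i, (s i).image χ = cls π k i :=
    fun i => (Finset.mem_filter.mp (hs i)).2
  have himg' : ∀ i, (s' i).image χ = cls π k i :=
    fun i => (Finset.mem_filter.mp (hs' i)).2
  funext i
  calc s i = (Finset.univ.biUnion s).filter (fun v => χ v ∈ cls π k i) :=
        (filter_biUnion π k χ s himg i).symm
    _ = (Finset.univ.biUnion s').filter (fun v => χ v ∈ cls π k i) := by
        simp only at heq; rw [heq]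
    _ = s' i := filter_biUnion π k χ s' himg' i

lemma clique_eq (π : List ℕ) {k ℓ n : ℕ} (hsum : π.sum = k)
    (hl2 : 2 ≤ ℓ) (hlk : ℓ ≤ k) (hmax : ∀ i, π.get i ≤ ℓ)
    (χ : Fin n → Fin k) (S : Fin π.length → Finset (Finset (Fin n)))
    (hS : ∀ i, ∀ s ∈ S i, s.card = π.get i) :
    cliqueSet k ℓ (GChi π k ℓ χ S) =
      (Fintype.piFinset (SChi π k χ S)).image (fun s => Finset.univ.biUnion s) := by
  ext T
  simp only [cliqueSet, Finset.mem_filter, Finset.mem_powersetCard, Finset.mem_image,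
    Fintype.mem_piFinset]
  constructor
  · rintro ⟨⟨-, hTk⟩, hclq⟩
    have hGmem : ∀ e, e ⊆ T → e.card = ℓ →
        ((e.image χ).card = ℓ ∧
          ∀ i, (e.filter (fun v => χ v ∈ cls π k i)).card = π.get i →
            e.filter (fun v => χ v ∈ cls π k i) ∈ S i) := by
      intro e h1 h2
      have := hclq e ⟨h1, h2⟩
      rw [GChi, Finset.mem_filter] at this
      exact this.2
    have hinj : Set.InjOn χ ↑T := by
      intro u hu v hv huv
      by_contra hne
      obtain ⟨e, he1, he2, he3⟩ := Finset.exists_subsuperset_card_eq (n := ℓ)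
        (show ({u, v} : Finset (Fin n)) ⊆ T from
          Finset.insert_subset (Finset.mem_coe.mp hu)
            (Finset.singleton_subset_iff.mpr (Finset.mem_coe.mp hv)))
        (by rw [Finset.card_pair hne]; exact hl2) (by rw [hTk]; exact hlk)
      have hiOn : Set.InjOn χ ↑e :=
        Finset.card_image_iff.mp (by rw [(hGmem e he2 he3).1, he3])
      exact hne (hiOn (he1 (Finset.mem_insert_self u {v}))
        (he1 (Finset.mem_insert_of_mem (Finset.mem_singleton_self v))) huv)
    have himgT : T.image χ = Finset.univ :=
      Finset.eq_univ_of_card _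
        (by rw [Finset.card_image_of_injOn hinj, hTk, Fintype.card_fin])
    set si := fun i => T.filter (fun v => χ v ∈ cls π k i) with hsi
    have himg_si : ∀ i, (si i).image χ = cls π k i := by
      intro i
      ext c
      simp only [hsi, Finset.mem_image, Finset.mem_filter]
      constructor
      · rintro ⟨v, ⟨hvT, hvc⟩, rfl⟩; exact hvc
      · intro hc
        have hcT : c ∈ T.image χ := himgT ▸ Finset.mem_univ c
        obtain ⟨v, hvT, rfl⟩ := Finset.mem_image.mp hcT
        exact ⟨v, ⟨hvT, hc⟩, rfl⟩
    have hcard_si : ∀ i, (si i).card = π.get i := by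
      intro i
      rw [← card_cls π hsum i, ← himg_si i]
      exact (Finset.card_image_of_injOn
        (hinj.mono (Finset.coe_subset.mpr (Finset.filter_subset _ _)))).symm
    have hsi_mem : ∀ i, si i ∈ S i := by
      intro i
      obtain ⟨e, he1, he2, he3⟩ := Finset.exists_subsuperset_card_eq (n := ℓ)
        (Finset.filter_subset _ T : si i ⊆ T)
        (by rw [hcard_si i]; exact hmax i) (by rw [hTk]; exact hlk)
      have hcond := (hGmem e he2 he3).2 i
      have hfe : e.filter (fun v => χ v ∈ cls π k i) = si i := by
        apply Finset.Subset.antisymm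
        · exact Finset.filter_subset_filter _ he2
        · intro v hv
          simp only [hsi, Finset.mem_filter] at hv
          exact Finset.mem_filter.mpr ⟨he1 (Finset.mem_filter.mpr hv), hv.2⟩
      rw [hfe] at hcond
      exact hcond (hcard_si i)
    refine ⟨si, fun i => ?_, ?_⟩
    · rw [SChi, Finset.mem_filter]; exact ⟨hsi_mem i, himg_si i⟩
    · apply Finset.Subset.antisymm
      · exact Finset.biUnion_subset.mpr (fun i _ => Finset.filter_subset _ _)
      · intro v hv
        obtain ⟨i, hci⟩ := cls_cover π hsum (χ v)
        exact Finset.mem_biUnion.mpr ⟨i, Finset.mem_univ i,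
          Finset.mem_filter.mpr ⟨hv, hci⟩⟩
  · rintro ⟨s, hs, rfl⟩
    have hmem : ∀ i, s i ∈ S i := fun i => (Finset.mem_filter.mp (hs i)).1
    have himg : ∀ i, (s i).image χ = cls π k i := fun i => (Finset.mem_filter.mp (hs i)).2
    have hcards : ∀ i, (s i).card = π.get i := fun i => hS i _ (hmem i)
    have hdisj : ∀ i j, i ≠ j → Disjoint (s i) (s j) := by
      intro i j hij
      rw [Finset.disjoint_left]
      intro v hvi hvj
      exact Finset.disjoint_left.mp (cls_disjoint π k hij)
        (himg i ▸ Finset.mem_image_of_mem χ hvi)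
        (himg j ▸ Finset.mem_image_of_mem χ hvj)
    have hTcard : (Finset.univ.biUnion s).card = k := by
      rw [Finset.card_biUnion (fun i _ j _ hij => hdisj i j hij)]
      simp_rw [hcards]
      rw [sum_get π, hsum]
    have hinjOn : Set.InjOn χ ↑(Finset.univ.biUnion s) := by
      intro u hu v hv huv
      obtain ⟨i, -, hui⟩ := Finset.mem_biUnion.mp (Finset.mem_coe.mp hu)
      obtain ⟨j, -, hvj⟩ := Finset.mem_biUnion.mp (Finset.mem_coe.mp hv)
      have hij : i = j := by
        by_contra hne
        have h1 : χ u ∈ cls π k i := himg i ▸ Finset.mem_image_of_mem χ hui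
        have h2 : χ v ∈ cls π k j := himg j ▸ Finset.mem_image_of_mem χ hvj
        rw [huv] at h1
        exact Finset.disjoint_left.mp (cls_disjoint π k hne) h1 h2
      subst hij
      have hIn : Set.InjOn χ ↑(s i) :=
        Finset.card_image_iff.mp (by rw [himg i, card_cls π hsum, hcards i])
      exact hIn (Finset.mem_coe.mpr hui) (Finset.mem_coe.mpr hvj) huv
    refine ⟨⟨Finset.subset_univ _, hTcard⟩, ?_⟩
    rintro e ⟨heT, hecard⟩
    rw [GChi, Finset.mem_filter, Finset.mem_powersetCard]
    refine ⟨⟨Finset.subset_univ _, hecard⟩, ?_, ?_⟩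
    · rw [Finset.card_image_of_injOn (hinjOn.mono (Finset.coe_subset.mpr heT))]
      exact hecard
    · intro i hcard_i
      have hsub : e.filter (fun v => χ v ∈ cls π k i) ⊆ s i := by
        rw [← filter_biUnion π k χ s himg i]
        exact Finset.filter_subset_filter _ heT
      have heq : e.filter (fun v => χ v ∈ cls π k i) = s i :=
        Finset.eq_of_subset_of_card_le hsub (by rw [hcard_i, hcards i])
      rw [heq]
      exact hmem i

end CDExpandAux
namespace CDExpandAux

open Finset

/-! ### Counting colourings -/

lemma attach_image_comp {α β : Type*} [DecidableEq α] [DecidableEq β] (s : Finset α) (f : α → β) :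
    s.attach.image (fun v => f v.1) = s.image f := by
  conv_rhs => rw [← Finset.attach_image_val (s := s)]
  rw [Finset.image_image]
  rfl

lemma card_bij_funs {n k : ℕ} (s : Finset (Fin n)) (C : Finset (Fin k))
    (hcard : s.card = C.card) :
    (Finset.univ.filter
        (fun h : {v // v ∈ s} → Fin k => s.attach.image h = C)).card = (C.card).factorial := by
  classical
  rw [← Fintype.card_subtype]
  have hbij : ∀ h : {h : {v // v ∈ s} → Fin k // s.attach.image h = C},
      Function.Bijective (fun v : {v // v ∈ s} =>
        (⟨h.1 v, by
          have := Finset.mem_image_of_mem h.1 (Finset.mem_attach s v)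
          rwa [h.2] at this⟩ :
          {c // c ∈ C})) := by
    rintro ⟨h, hh⟩
    have hinjOn : Set.InjOn h ↑s.attach := Finset.card_image_iff.mp
      (by rw [hh, ← hcard, Finset.card_attach])
    have hinj : Function.Injective h := fun u v huv =>
      hinjOn (Finset.mem_coe.mpr (Finset.mem_attach _ _))
        (Finset.mem_coe.mpr (Finset.mem_attach _ _)) huv
    rw [Fintype.bijective_iff_injective_and_card]
    constructor
    · intro u v huv
      exact hinj (congrArg Subtype.val huv)
    · simp [Fintype.card_coe, hcard]
  have E : {h : {v // v ∈ s} → Fin k // s.attach.image h = C} ≃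
      ({v // v ∈ s} ≃ {c // c ∈ C}) := by
    refine ⟨fun h => Equiv.ofBijective _ (hbij h), fun e => ⟨fun v => (e v).1, ?_⟩, ?_, ?_⟩
    · ext c
      simp only [Finset.mem_image]
      constructor
      · rintro ⟨v, -, rfl⟩
        exact (e v).2
      · intro hc
        exact ⟨e.symm ⟨c, hc⟩, Finset.mem_attach _ _, by simp⟩
    · rintro ⟨h, hh⟩
      rfl
    · intro e
      exact Equiv.ext (fun v => Subtype.ext rfl)
  rw [Fintype.card_congr E,
    Fintype.card_equiv (Fintype.equivOfCardEq (by simp [Fintype.card_coe, hcard])),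
    Fintype.card_coe, hcard]

lemma count_colorings_aux {n k t : ℕ} (s : Fin t → Finset (Fin n))
    (C : Fin t → Finset (Fin k))
    (hsd : ∀ i j, i ≠ j → Disjoint (s i) (s j))
    (hcard : ∀ i, (s i).card = (C i).card) (J : Finset (Fin t)) :
    (Finset.univ.filter
        (fun χ : Fin n → Fin k => ∀ i ∈ J, (s i).image χ = C i)).card
        * k ^ (∑ i ∈ J, (s i).card)
      = (∏ i ∈ J, ((C i).card).factorial) * k ^ n := by
  classical
  induction J using Finset.induction with
  | empty =>
    simp [Finset.filter_true_of_mem, Finset.card_univ, Fintype.card_fun]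
  | @insert j J hj ih =>
    -- the key step : an involution
    set F : (Fin n → Fin k) × ({v // v ∈ s j} → Fin k) →
        (Fin n → Fin k) × ({v // v ∈ s j} → Fin k) :=
      fun χg => (fun v => if hv : v ∈ s j then χg.2 ⟨v, hv⟩ else χg.1 v,
        fun v => χg.1 v.1) with hF
    have hFF : ∀ a, F (F a) = a := by
      rintro ⟨χ, g⟩
      simp only [hF]
      refine Prod.ext ?_ ?_
      · funext v
        by_cases hv : v ∈ s j <;> simp [hv]
      · funext v
        simp [v.2]
    have hstep :
        (Finset.univ.filter
            (fun χ : Fin n → Fin k => ∀ i ∈ insert j J, (s i).image χ = C i)).card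
            * k ^ (s j).card
          = (Finset.univ.filter
              (fun χ : Fin n → Fin k => ∀ i ∈ J, (s i).image χ = C i)).card
            * ((C j).card).factorial := by
      rw [← card_bij_funs (s j) (C j) (hcard j)]
      rw [show k ^ (s j).card =
        (Finset.univ : Finset ({v // v ∈ s j} → Fin k)).card by
          simp [Finset.card_univ, Fintype.card_fun, Fintype.card_coe]]
      rw [← Finset.card_product, ← Finset.card_product]
      apply Finset.card_nbij' F F
      · rintro ⟨χ, g⟩ hχg
        rw [Finset.mem_coe, Finset.mem_product] at hχg ⊢
        obtain ⟨hχ, -⟩ := hχg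
        rw [Finset.mem_filter] at hχ
        constructor
        · rw [Finset.mem_filter]
          refine ⟨Finset.mem_univ _, ?_⟩
          intro i hi
          have hij : i ≠ j := fun h => hj (h ▸ hi)
          have : (s i).image (fun v => if hv : v ∈ s j then g ⟨v, hv⟩ else χ v)
              = (s i).image χ := by
            apply Finset.image_congr
            intro v hv
            have : v ∉ s j := Finset.disjoint_left.mp (hsd i j hij) hv
            simp [this]
          simp only [hF]
          rw [this]
          exact hχ.2 i (Finset.mem_insert_of_mem hi)
        · rw [Finset.mem_filter]
          refine ⟨Finset.mem_univ _, ?_⟩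
          simp only [hF]
          rw [attach_image_comp]
          exact hχ.2 j (Finset.mem_insert_self _ _)
      · rintro ⟨χ, g⟩ hχg
        rw [Finset.mem_coe, Finset.mem_product] at hχg ⊢
        obtain ⟨hχ, hg⟩ := hχg
        rw [Finset.mem_filter] at hχ hg
        refine ⟨Finset.mem_filter.mpr ⟨Finset.mem_univ _, ?_⟩, Finset.mem_univ _⟩
        intro i hi
        rcases Finset.mem_insert.mp hi with rfl | hi
        · simp only [hF]
          rw [← attach_image_comp (s i)
            (fun v => if hv : v ∈ s i then g ⟨v, hv⟩ else χ v)]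
          exact (Finset.image_congr (fun v _ => by simp [v.2])).trans hg.2
        · simp only [hF]
          have : (s i).image (fun v => if hv : v ∈ s j then g ⟨v, hv⟩ else χ v)
              = (s i).image χ := by
            apply Finset.image_congr
            intro v hv
            have hij : i ≠ j := fun h => hj (h ▸ hi)
            have : v ∉ s j := Finset.disjoint_left.mp (hsd i j hij) hv
            simp [this]
          rw [this]
          exact hχ.2 i hi
      · intro a _
        exact hFF a
      · intro a _
        exact hFF a
    rw [Finset.sum_insert hj, Finset.prod_insert hj, pow_add]
    calc (Finset.univ.filter
            (fun χ : Fin n → Fin k => ∀ i ∈ insert j J, (s i).image χ = C i)).card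
            * (k ^ (s j).card * k ^ (∑ i ∈ J, (s i).card))
        = ((Finset.univ.filter
            (fun χ : Fin n → Fin k => ∀ i ∈ insert j J, (s i).image χ = C i)).card
            * k ^ (s j).card) * k ^ (∑ i ∈ J, (s i).card) := by ring
      _ = ((Finset.univ.filter
            (fun χ : Fin n → Fin k => ∀ i ∈ J, (s i).image χ = C i)).card
            * ((C j).card).factorial) * k ^ (∑ i ∈ J, (s i).card) := by rw [hstep]
      _ = ((C j).card).factorial * ((Finset.univ.filter
            (fun χ : Fin n → Fin k => ∀ i ∈ J, (s i).image χ = C i)).card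
            * k ^ (∑ i ∈ J, (s i).card)) := by ring
      _ = ((C j).card).factorial * ((∏ i ∈ J, ((C i).card).factorial) * k ^ n) := by rw [ih]
      _ = _ := by ring

lemma count_colorings {n k t : ℕ} (hk : 0 < k) (s : Fin t → Finset (Fin n))
    (C : Fin t → Finset (Fin k))
    (hsd : ∀ i j, i ≠ j → Disjoint (s i) (s j))
    (hcard : ∀ i, (s i).card = (C i).card) :
    (Finset.univ.filter (fun χ : Fin n → Fin k => ∀ i, (s i).image χ = C i)).card
      = (∏ i, ((C i).card).factorial) * k ^ (n - (Finset.univ.biUnion s).card) := by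
  classical
  have h := count_colorings_aux s C hsd hcard Finset.univ
  simp only [Finset.mem_univ, true_implies] at h
  have hU : (Finset.univ.biUnion s).card = ∑ i, (s i).card :=
    Finset.card_biUnion (fun i _ j _ hij => hsd i j hij)
  have hle : ∑ i, (s i).card ≤ n := by
    rw [← hU]
    calc (Finset.univ.biUnion s).card ≤ (Finset.univ : Finset (Fin n)).card :=
          Finset.card_le_card (Finset.subset_univ _)
      _ = n := by simp
  have hpow : k ^ n = k ^ (n - ∑ i, (s i).card) * k ^ (∑ i, (s i).card) := by
    rw [← pow_add]
    congr 1
    omega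
  rw [hpow, ← mul_assoc] at h
  rw [hU]
  exact Nat.eq_of_mul_eq_mul_right (Nat.pow_pos (n := _) hk) h

lemma colorings_of_tuple (π : List ℕ) {k n : ℕ} (hsum : π.sum = k) (hk : 0 < k)
    (s : Fin π.length → Finset (Fin n)) (hcard : ∀ i, (s i).card = π.get i)
    (hdisj : ∀ i j, i ≠ j → Disjoint (s i) (s j)) :
    (Finset.univ.filter
        (fun χ : Fin n → Fin k => ∀ i, (s i).image χ = cls π k i)).card
      = (∏ i : Fin π.length, (π.get i).factorial) * k ^ (n - k) := by
  rw [count_colorings hk s (cls π k) hdisj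
    (fun i => by rw [hcard i, card_cls π hsum])]
  congr 1
  · exact Finset.prod_congr rfl (fun i _ => by rw [card_cls π hsum])
  · congr 1
    rw [Finset.card_biUnion (fun i _ j _ h => hdisj i j h)]
    simp_rw [hcard]
    rw [sum_get π, hsum]

lemma colorings_of_overlapping (π : List ℕ) {k n : ℕ}
    (s : Fin π.length → Finset (Fin n))
    (hnd : ¬ ∀ i j, i ≠ j → Disjoint (s i) (s j)) :
    (Finset.univ.filter
        (fun χ : Fin n → Fin k => ∀ i, (s i).image χ = cls π k i)) = ∅ := by
  push_neg at hnd
  obtain ⟨i, j, hij, hnd⟩ := hnd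
  rw [Finset.not_disjoint_iff] at hnd
  obtain ⟨v, hvi, hvj⟩ := hnd
  rw [Finset.filter_eq_empty_iff]
  intro χ _ hχ
  have h1 : χ v ∈ cls π k i := hχ i ▸ Finset.mem_image_of_mem χ hvi
  have h2 : χ v ∈ cls π k j := hχ j ▸ Finset.mem_image_of_mem χ hvj
  exact Finset.disjoint_left.mp (cls_disjoint π k hij) h1 h2

lemma disjoint_of_card_biUnion {α : Type*} [DecidableEq α] {t : ℕ}
    (s : Fin t → Finset α)
    (h : ∑ i, (s i).card ≤ (Finset.univ.biUnion s).card) :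
    ∀ i j, i ≠ j → Disjoint (s i) (s j) := by
  intro i j hij
  by_contra hnd
  rw [Finset.not_disjoint_iff] at hnd
  obtain ⟨v, hvi, hvj⟩ := hnd
  have h1 : Finset.univ.biUnion s = s i ∪ (Finset.univ.erase i).biUnion s := by
    conv_lhs => rw [← Finset.insert_erase (Finset.mem_univ i)]
    rw [Finset.biUnion_insert]
  have h2 : ((Finset.univ.erase i).biUnion s).card
      ≤ ∑ l ∈ Finset.univ.erase i, (s l).card := Finset.card_biUnion_le
  have h3 : v ∈ s i ∩ (Finset.univ.erase i).biUnion s := by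
    rw [Finset.mem_inter]
    refine ⟨hvi, Finset.mem_biUnion.mpr ⟨j, ?_, hvj⟩⟩
    exact Finset.mem_erase.mpr ⟨fun hji => hij (hji.symm ▸ rfl), Finset.mem_univ _⟩
  have h4 := Finset.card_union_add_card_inter (s i)
    ((Finset.univ.erase i).biUnion s)
  have h5 : 0 < (s i ∩ (Finset.univ.erase i).biUnion s).card :=
    Finset.card_pos.mpr ⟨v, h3⟩
  have h6 : ∑ l ∈ Finset.univ.erase i, (s l).card + (s i).card = ∑ l, (s l).card :=
    Finset.sum_erase_add _ _ (Finset.mem_univ i)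
  rw [h1] at h
  omega

end CDExpandAux
namespace CDExpandAux

open Finset

/-! ### Bounding the number of overlapping tuples -/

lemma overlap_pair_bound {t n m : ℕ} (hm : 2 ≤ m)
    (S : Fin t → Finset (Finset (Fin n)))
    (kk : Fin t → ℕ)
    (hS : ∀ i, ∀ s ∈ S i, s.card = kk i)
    (hpos : ∀ i, 0 < kk i)
    (hsum : ∑ i, kk i = m)
    {i j : Fin t} (hij : i ≠ j) :
    ((Fintype.piFinset S).filter
        (fun s => ¬ Disjoint (s i) (s j))).card ≤ n ^ (m - 1) := by
  classical
  have hsub : (Fintype.piFinset S).filter (fun s => ¬ Disjoint (s i) (s j))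
      ⊆ (Finset.univ : Finset (Fin n)).biUnion
          (fun v => (Fintype.piFinset S).filter (fun s => v ∈ s i ∧ v ∈ s j)) := by
    intro s hs
    rw [Finset.mem_filter] at hs
    obtain ⟨hs1, hs2⟩ := hs
    rw [Finset.not_disjoint_iff] at hs2
    obtain ⟨v, hvi, hvj⟩ := hs2
    exact Finset.mem_biUnion.mpr ⟨v, Finset.mem_univ v,
      Finset.mem_filter.mpr ⟨hs1, hvi, hvj⟩⟩
  -- per-vertex bound
  have hv : ∀ v : Fin n,
      ((Fintype.piFinset S).filter (fun s => v ∈ s i ∧ v ∈ s j)).card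
        ≤ n ^ (m - 2) := by
    intro v
    set mfun : Fin t → ℕ := fun l => if l = i ∨ l = j then kk l - 1 else kk l with hmfun
    set T : Fin t → Finset (Finset (Fin n)) :=
      fun l => Finset.powersetCard (mfun l) Finset.univ with hT
    set Ψ : (Fin t → Finset (Fin n)) → (Fin t → Finset (Fin n)) :=
      fun s l => if l = i ∨ l = j then (s l).erase v else s l with hΨ
    have hmaps : ∀ s ∈ (Fintype.piFinset S).filter (fun s => v ∈ s i ∧ v ∈ s j),
        Ψ s ∈ Fintype.piFinset T := by
      intro s hs
      rw [Finset.mem_filter, Fintype.mem_piFinset] at hs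
      obtain ⟨hs1, hvi, hvj⟩ := hs
      rw [Fintype.mem_piFinset]
      intro l
      rw [hT, Finset.mem_powersetCard]
      refine ⟨Finset.subset_univ _, ?_⟩
      rw [hΨ, hmfun]
      by_cases hl : l = i ∨ l = j
      · have hvl : v ∈ s l := by rcases hl with rfl | rfl <;> assumption
        simp only [hl, if_true]
        rw [Finset.card_erase_of_mem hvl, hS l _ (hs1 l)]
      · simp only [hl, if_false]
        exact hS l _ (hs1 l)
    have hinj : Set.InjOn Ψ
        ((Fintype.piFinset S).filter (fun s => v ∈ s i ∧ v ∈ s j)) := by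
      intro s hs s' hs' heq
      rw [Finset.mem_coe, Finset.mem_filter] at hs hs'
      funext l
      have hl := congrFun heq l
      rw [hΨ] at hl
      by_cases hcase : l = i ∨ l = j
      · simp only [hcase, if_true] at hl
        have hvl : v ∈ s l := by
          rcases hcase with rfl | rfl
          exacts [hs.2.1, hs.2.2]
        have hvl' : v ∈ s' l := by
          rcases hcase with rfl | rfl
          exacts [hs'.2.1, hs'.2.2]
        rw [← Finset.insert_erase hvl, ← Finset.insert_erase hvl', hl]
      · simpa only [hcase, if_false] using hl
    have hcardT : (Fintype.piFinset T).card ≤ n ^ (m - 2) := by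
      rw [Fintype.card_piFinset]
      have h1 : ∀ l, (T l).card ≤ n ^ (mfun l) := by
        intro l
        rw [hT, Finset.card_powersetCard, Finset.card_univ, Fintype.card_fin]
        exact Nat.choose_le_pow n (mfun l)
      calc ∏ l, (T l).card ≤ ∏ l, n ^ (mfun l) :=
            Finset.prod_le_prod' (fun l _ => h1 l)
        _ = n ^ (∑ l, mfun l) := Finset.prod_pow_eq_pow_sum _ _ _
        _ = n ^ (m - 2) := by
            congr 1
            have h2 : ∀ l, mfun l + (if l = i ∨ l = j then 1 else 0) = kk l := by
              intro l
              rw [hmfun]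
              by_cases hl : l = i ∨ l = j <;> simp [hl]
              · have := hpos l; omega
            have h3 : ∑ l, (mfun l + (if l = i ∨ l = j then 1 else 0)) = m := by
              rw [Finset.sum_congr rfl (fun l _ => h2 l), hsum]
            rw [Finset.sum_add_distrib] at h3
            have h4 : ∑ l, (if l = i ∨ l = j then 1 else 0) = 2 := by
              have h5 : Finset.univ.filter (fun l => l = i ∨ l = j) = {i, j} := by
                ext l; simp
              calc ∑ l, (if l = i ∨ l = j then 1 else 0)
                  = ∑ l ∈ Finset.univ.filter (fun l => l = i ∨ l = j), 1 :=
                    (Finset.sum_filter _ _).symm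
                _ = ({i, j} : Finset (Fin t)).card := by
                    rw [h5, Finset.card_eq_sum_ones]
                _ = 2 := Finset.card_pair hij
            omega
    calc ((Fintype.piFinset S).filter (fun s => v ∈ s i ∧ v ∈ s j)).card
        ≤ (Fintype.piFinset T).card := Finset.card_le_card_of_injOn Ψ hmaps hinj
      _ ≤ n ^ (m - 2) := hcardT
  calc ((Fintype.piFinset S).filter (fun s => ¬ Disjoint (s i) (s j))).card
      ≤ ((Finset.univ : Finset (Fin n)).biUnion
          (fun v => (Fintype.piFinset S).filter (fun s => v ∈ s i ∧ v ∈ s j))).card :=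
        Finset.card_le_card hsub
    _ ≤ ∑ v : Fin n, ((Fintype.piFinset S).filter
          (fun s => v ∈ s i ∧ v ∈ s j)).card := Finset.card_biUnion_le
    _ ≤ ∑ _v : Fin n, n ^ (m - 2) := Finset.sum_le_sum (fun v _ => hv v)
    _ = n * n ^ (m - 2) := by rw [Finset.sum_const, Finset.card_univ,
          Fintype.card_fin, smul_eq_mul]
    _ = n ^ (m - 1) := by
        rw [← pow_succ']
        congr 1
        omega

lemma overlap_bound {t n m : ℕ} (hm : 2 ≤ m)
    (S : Fin t → Finset (Finset (Fin n)))
    (kk : Fin t → ℕ)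
    (hS : ∀ i, ∀ s ∈ S i, s.card = kk i)
    (hpos : ∀ i, 0 < kk i)
    (hsum : ∑ i, kk i = m) :
    ((Fintype.piFinset S).filter
        (fun s => ¬ ∀ i j, i ≠ j → Disjoint (s i) (s j))).card
      ≤ t * t * n ^ (m - 1) := by
  classical
  have hsub : (Fintype.piFinset S).filter
        (fun s => ¬ ∀ i j, i ≠ j → Disjoint (s i) (s j))
      ⊆ (Finset.univ : Finset (Fin t × Fin t)).biUnion
          (fun q => (Fintype.piFinset S).filter
            (fun s => q.1 ≠ q.2 ∧ ¬ Disjoint (s q.1) (s q.2))) := by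
    intro s hs
    rw [Finset.mem_filter] at hs
    obtain ⟨hs1, hs2⟩ := hs
    push_neg at hs2
    obtain ⟨i, j, hij, hnd⟩ := hs2
    exact Finset.mem_biUnion.mpr ⟨(i, j), Finset.mem_univ _,
      Finset.mem_filter.mpr ⟨hs1, hij, hnd⟩⟩
  have hq : ∀ q : Fin t × Fin t,
      ((Fintype.piFinset S).filter
        (fun s => q.1 ≠ q.2 ∧ ¬ Disjoint (s q.1) (s q.2))).card ≤ n ^ (m - 1) := by
    intro q
    by_cases hij : q.1 = q.2
    · have : (Fintype.piFinset S).filter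
          (fun s => q.1 ≠ q.2 ∧ ¬ Disjoint (s q.1) (s q.2)) = ∅ := by
        rw [Finset.filter_eq_empty_iff]
        intro s _
        simp [hij]
      rw [this]
      simp
    · calc ((Fintype.piFinset S).filter
            (fun s => q.1 ≠ q.2 ∧ ¬ Disjoint (s q.1) (s q.2))).card
          ≤ ((Fintype.piFinset S).filter
            (fun s => ¬ Disjoint (s q.1) (s q.2))).card := by
            apply Finset.card_le_card
            exact Finset.monotone_filter_right _ (fun s _ hs => hs.2)
        _ ≤ n ^ (m - 1) := overlap_pair_bound hm S kk hS hpos hsum hij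
  calc ((Fintype.piFinset S).filter
        (fun s => ¬ ∀ i j, i ≠ j → Disjoint (s i) (s j))).card
      ≤ ((Finset.univ : Finset (Fin t × Fin t)).biUnion
          (fun q => (Fintype.piFinset S).filter
            (fun s => q.1 ≠ q.2 ∧ ¬ Disjoint (s q.1) (s q.2)))).card :=
        Finset.card_le_card hsub
    _ ≤ ∑ q : Fin t × Fin t, ((Fintype.piFinset S).filter
          (fun s => q.1 ≠ q.2 ∧ ¬ Disjoint (s q.1) (s q.2))).card :=
        Finset.card_biUnion_le
    _ ≤ ∑ _q : Fin t × Fin t, n ^ (m - 1) := Finset.sum_le_sum (fun q _ => hq q)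
    _ = t * t * n ^ (m - 1) := by
        rw [Finset.sum_const, Finset.card_univ, Fintype.card_prod, Fintype.card_fin,
          smul_eq_mul]

end CDExpandAux
open CDExpandAux in
/-- if every part of `π` is at most `ℓ` then `CD_p(ℓ)` implies `Expand_p(π)`. -/
theorem cd_implies_expand (k ℓ : ℕ) (hk : 3 ≤ k) (hℓ2 : 2 ≤ ℓ) (hℓk : ℓ < k)
    (p : ℝ) (hp0 : 0 < p) (hp1 : p < 1)
    (π : List ℕ) (hπ : ProperPartition k π) (hmax : ∀ m ∈ π, m ≤ ℓ)
    (H : HSeq) (hH : UniformSeq k H) (h : CD k p ℓ H) :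
    Expand k p π H := by
  obtain ⟨f, hfo, hf⟩ := h
  obtain ⟨hlen, hposl, hsum⟩ := hπ
  have hk0 : 0 < k := by omega
  have hget_pos : ∀ i : Fin π.length, 0 < π.get i :=
    fun i => hposl _ (π.get_mem i)
  have hget_le : ∀ i : Fin π.length, π.get i ≤ ℓ :=
    fun i => hmax _ (π.get_mem i)
  refine ⟨fun m => (k : ℝ) ^ k * |f m|
      + p * ((π.length * π.length : ℕ) : ℝ) * (m : ℝ) ^ (k - 1), ?_, ?_⟩
  · apply IsLittleO.add
    · have h1 : (fun m => ‖f m‖) =o[atTop] (fun m : ℕ => (m : ℝ) ^ k) := hfo.norm_left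
      simpa [Real.norm_eq_abs] using h1.const_mul_left ((k : ℝ) ^ k)
    · have h1 : (fun m : ℕ => ((m : ℝ)) ^ (k - 1)) =o[atTop]
          (fun m : ℕ => (m : ℝ) ^ k) :=
        (Asymptotics.isLittleO_pow_pow_atTop_of_lt (by omega : k - 1 < k)).comp_tendsto
          tendsto_natCast_atTop_atTop
      simpa [mul_assoc] using h1.const_mul_left (p * ((π.length * π.length : ℕ) : ℝ))
  · intro n S hS
    set c0 := (∏ i : Fin π.length, (π.get i).factorial) * k ^ (n - k) with hc0
    set DS := (Fintype.piFinset S).filter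
      (fun s => ∀ i j, i ≠ j → Disjoint (s i) (s j)) with hDS
    set RS := (Fintype.piFinset S).filter
      (fun s => ¬ ∀ i j, i ≠ j → Disjoint (s i) (s j)) with hRS
    have hDR : DS.card + RS.card = ∏ i, (S i).card := by
      rw [← Fintype.card_piFinset S]
      exact Finset.card_filter_add_card_filter_not _
    -- B2 : counting colourings against all tuples
    have hB2 : ∑ χ : Fin n → Fin k, ∏ i, ((SChi π k χ S i).card)
        = c0 * DS.card := by
      have hswap : ∀ χ : Fin n → Fin k, ∏ i, ((SChi π k χ S i).card)
          = ∑ s ∈ Fintype.piFinset S,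
              if (∀ i, (s i).image χ = cls π k i) then 1 else 0 := by
        intro χ
        rw [← Fintype.card_piFinset]
        have hpieq : Fintype.piFinset (SChi π k χ S)
            = (Fintype.piFinset S).filter
                (fun s => ∀ i, (s i).image χ = cls π k i) := by
          ext s
          simp only [Fintype.mem_piFinset, SChi, Finset.mem_filter]
          exact ⟨fun hs => ⟨fun i => (hs i).1, fun i => (hs i).2⟩,
            fun hs i => ⟨hs.1 i, hs.2 i⟩⟩
        rw [hpieq, Finset.card_filter]
      calc ∑ χ : Fin n → Fin k, ∏ i, ((SChi π k χ S i).card)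
          = ∑ χ : Fin n → Fin k, ∑ s ∈ Fintype.piFinset S,
              if (∀ i, (s i).image χ = cls π k i) then 1 else 0 :=
            Finset.sum_congr rfl (fun χ _ => hswap χ)
        _ = ∑ s ∈ Fintype.piFinset S, ∑ χ : Fin n → Fin k,
              if (∀ i, (s i).image χ = cls π k i) then 1 else 0 := Finset.sum_comm
        _ = ∑ s ∈ Fintype.piFinset S,
              (if (∀ i j, i ≠ j → Disjoint (s i) (s j)) then c0 else 0) := by
            apply Finset.sum_congr rfl
            intro s hs
            rw [← Finset.card_filter]
            by_cases hd : ∀ i j, i ≠ j → Disjoint (s i) (s j)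
            · rw [if_pos hd, colorings_of_tuple π hsum hk0 s
                (fun i => hS i _ (Fintype.mem_piFinset.mp hs i)) hd]
            · rw [if_neg hd, colorings_of_overlapping π s hd, Finset.card_empty]
        _ = ∑ _s ∈ DS, c0 := (Finset.sum_filter _ _).symm
        _ = c0 * DS.card := by rw [Finset.sum_const, smul_eq_mul, mul_comm]
    -- B1 : counting colourings against tuples forming an edge
    have hB1 : ∑ χ : Fin n → Fin k, eCount (H n) (SChi π k χ S)
        = c0 * eCount (H n) S := by
      have hswap : ∀ χ : Fin n → Fin k, eCount (H n) (SChi π k χ S)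
          = ∑ s ∈ (Fintype.piFinset S).filter
                (fun s => Finset.univ.biUnion s ∈ H n),
              if (∀ i, (s i).image χ = cls π k i) then 1 else 0 := by
        intro χ
        rw [eCount, ← Finset.card_filter]
        congr 1
        ext s
        simp only [Fintype.mem_piFinset, SChi, Finset.mem_filter]
        constructor
        · rintro ⟨hs, hb⟩
          exact ⟨⟨fun i => (hs i).1, hb⟩, fun i => (hs i).2⟩
        · rintro ⟨⟨h1, hb⟩, h2⟩
          exact ⟨fun i => ⟨h1 i, h2 i⟩, hb⟩
      calc ∑ χ : Fin n → Fin k, eCount (H n) (SChi π k χ S)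
          = ∑ χ : Fin n → Fin k, ∑ s ∈ (Fintype.piFinset S).filter
                (fun s => Finset.univ.biUnion s ∈ H n),
              if (∀ i, (s i).image χ = cls π k i) then 1 else 0 :=
            Finset.sum_congr rfl (fun χ _ => hswap χ)
        _ = ∑ s ∈ (Fintype.piFinset S).filter
                (fun s => Finset.univ.biUnion s ∈ H n),
              ∑ χ : Fin n → Fin k,
              if (∀ i, (s i).image χ = cls π k i) then 1 else 0 := Finset.sum_comm
        _ = ∑ _s ∈ (Fintype.piFinset S).filter
                (fun s => Finset.univ.biUnion s ∈ H n), c0 := by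
            apply Finset.sum_congr rfl
            intro s hs
            rw [Finset.mem_filter] at hs
            obtain ⟨hs1, hs2⟩ := hs
            have hcards : ∀ i, (s i).card = π.get i :=
              fun i => hS i _ (Fintype.mem_piFinset.mp hs1 i)
            have hbk : (Finset.univ.biUnion s).card = k := hH n _ hs2
            have hsle : ∑ i, (s i).card ≤ (Finset.univ.biUnion s).card := by
              rw [hbk]
              apply le_of_eq
              simp_rw [hcards]
              rw [sum_get π, hsum]
            have hd := disjoint_of_card_biUnion s hsle
            rw [← Finset.card_filter, colorings_of_tuple π hsum hk0 s hcards hd]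
        _ = c0 * eCount (H n) S := by
            rw [Finset.sum_const, smul_eq_mul, mul_comm]
            rfl
    -- CD applied to each colouring
    have hCD : ∀ χ : Fin n → Fin k,
        |(eCount (H n) (SChi π k χ S) : ℝ)
          - p * ((∏ i, (SChi π k χ S i).card : ℕ) : ℝ)| ≤ |f n| := by
      intro χ
      have hG : ∀ e ∈ GChi π k ℓ χ S, e.card = ℓ := by
        intro e he
        rw [GChi, Finset.mem_filter, Finset.mem_powersetCard] at he
        exact he.1.2
      have h2 := hf n (GChi π k ℓ χ S) hG
      have hceq := clique_eq π hsum hℓ2 (le_of_lt hℓk) hget_le χ S hS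
      have hinj := biUnion_injOn π k χ S
      have hE1 : (cliqueSet k ℓ (GChi π k ℓ χ S)).card
          = ∏ i, (SChi π k χ S i).card := by
        rw [hceq, Finset.card_image_of_injOn hinj, Fintype.card_piFinset]
      have hE2 : ((cliqueSet k ℓ (GChi π k ℓ χ S)) ∩ H n).card
          = eCount (H n) (SChi π k χ S) := by
        rw [hceq]
        have himf : ((Fintype.piFinset (SChi π k χ S)).image
              (fun s => Finset.univ.biUnion s)) ∩ H n
            = ((Fintype.piFinset (SChi π k χ S)).filter
                (fun s => Finset.univ.biUnion s ∈ H n)).image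
                (fun s => Finset.univ.biUnion s) := by
          ext T
          simp only [Finset.mem_inter, Finset.mem_image, Finset.mem_filter]
          constructor
          · rintro ⟨⟨s, hs, rfl⟩, hT⟩
            exact ⟨s, ⟨hs, hT⟩, rfl⟩
          · rintro ⟨s, ⟨hs, hT⟩, rfl⟩
            exact ⟨⟨s, hs, rfl⟩, hT⟩
        rw [himf, Finset.card_image_of_injOn
          (hinj.mono (Finset.coe_subset.mpr (Finset.filter_subset _ _)))]
        rfl
      rw [← hE1, ← hE2]
      exact h2.trans (le_abs_self _)
    -- summing the CD estimates
    have hkey : (c0 : ℝ) * |((eCount (H n) S : ℕ) : ℝ) - p * (DS.card : ℝ)|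
        ≤ (k : ℝ) ^ n * |f n| := by
      have heq : (c0 : ℝ) * (((eCount (H n) S : ℕ) : ℝ) - p * (DS.card : ℝ))
          = ∑ χ : Fin n → Fin k,
              ((eCount (H n) (SChi π k χ S) : ℝ)
                - p * ((∏ i, (SChi π k χ S i).card : ℕ) : ℝ)) := by
        rw [Finset.sum_sub_distrib, ← Finset.mul_sum,
          ← Nat.cast_sum, ← Nat.cast_sum, hB1, hB2]
        push_cast
        ring
      calc (c0 : ℝ) * |((eCount (H n) S : ℕ) : ℝ) - p * (DS.card : ℝ)|
          = |(c0 : ℝ) * (((eCount (H n) S : ℕ) : ℝ) - p * (DS.card : ℝ))| := by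
            rw [abs_mul, abs_of_nonneg (by positivity : (0:ℝ) ≤ (c0 : ℝ))]
        _ = |∑ χ : Fin n → Fin k,
              ((eCount (H n) (SChi π k χ S) : ℝ)
                - p * ((∏ i, (SChi π k χ S i).card : ℕ) : ℝ))| := by rw [heq]
        _ ≤ ∑ χ : Fin n → Fin k,
              |(eCount (H n) (SChi π k χ S) : ℝ)
                - p * ((∏ i, (SChi π k χ S i).card : ℕ) : ℝ)| :=
            Finset.abs_sum_le_sum_abs _ _
        _ ≤ ∑ _χ : Fin n → Fin k, |f n| := Finset.sum_le_sum (fun χ _ => hCD χ)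
        _ = (k : ℝ) ^ n * |f n| := by
            rw [Finset.sum_const, Finset.card_univ, Fintype.card_fun,
              Fintype.card_fin, Fintype.card_fin, nsmul_eq_mul]
            push_cast
            ring
    have hc0pos : 0 < c0 := Nat.mul_pos
      (Finset.prod_pos (fun i _ => Nat.factorial_pos _)) (Nat.pow_pos (n := _) hk0)
    have hkn : k ^ n ≤ k ^ k * c0 := by
      rw [hc0]
      calc k ^ n ≤ k ^ k * k ^ (n - k) := by
            rw [← pow_add]
            exact Nat.pow_le_pow_right hk0 (by omega)
        _ ≤ k ^ k * ((∏ i : Fin π.length, (π.get i).factorial) * k ^ (n - k)) := by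
            apply Nat.mul_le_mul_left
            exact Nat.le_mul_of_pos_left _
              (Finset.prod_pos (fun i _ => Nat.factorial_pos _))
    have habs2 : |((eCount (H n) S : ℕ) : ℝ) - p * (DS.card : ℝ)|
        ≤ (k : ℝ) ^ k * |f n| := by
      have h1 : (c0 : ℝ) * |((eCount (H n) S : ℕ) : ℝ) - p * (DS.card : ℝ)|
          ≤ ((k ^ k * c0 : ℕ) : ℝ) * |f n| := by
        refine hkey.trans (mul_le_mul_of_nonneg_right ?_ (abs_nonneg _))
        exact_mod_cast hkn
      have h2 : ((k ^ k * c0 : ℕ) : ℝ) * |f n|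
          = (c0 : ℝ) * ((k : ℝ) ^ k * |f n|) := by push_cast; ring
      rw [h2] at h1
      exact le_of_mul_le_mul_left h1 (by exact_mod_cast hc0pos)
    have hRb : (RS.card : ℝ) ≤ ((π.length * π.length * n ^ (k - 1) : ℕ) : ℝ) := by
      have := overlap_bound (t := π.length) (n := n) (m := k) (by omega) S
        (fun i => π.get i) hS hget_pos (by rw [sum_get π, hsum])
      exact_mod_cast this
    have hprod : ((∏ i, (S i).card : ℕ) : ℝ) = (DS.card : ℝ) + (RS.card : ℝ) := by
      rw [← hDR]
      push_cast
      ring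
    have hmain : |((eCount (H n) S : ℕ) : ℝ) - p * ((∏ i, (S i).card : ℕ) : ℝ)|
        ≤ (k : ℝ) ^ k * |f n|
          + p * ((π.length * π.length : ℕ) : ℝ) * (n : ℝ) ^ (k - 1) := by
      rw [hprod]
      have hsplit : ((eCount (H n) S : ℕ) : ℝ) - p * ((DS.card : ℝ) + (RS.card : ℝ))
          = (((eCount (H n) S : ℕ) : ℝ) - p * (DS.card : ℝ)) + (-(p * (RS.card : ℝ))) := by
        ring
      rw [hsplit]
      refine (abs_add_le _ _).trans ?_
      rw [abs_neg, abs_of_nonneg (mul_nonneg hp0.le (Nat.cast_nonneg _))]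
      refine add_le_add habs2 ?_
      calc p * (RS.card : ℝ)
          ≤ p * ((π.length * π.length * n ^ (k - 1) : ℕ) : ℝ) :=
            mul_le_mul_of_nonneg_left hRb (le_of_lt hp0)
        _ = p * ((π.length * π.length : ℕ) : ℝ) * (n : ℝ) ^ (k - 1) := by
            push_cast
            ring
    rw [← Nat.cast_prod]
    exact hmain
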